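/- Let K be a sextic number field defined by an irreducible trinomial x^6 + a x^5 + b with 2 ∣ a and 2 ∤ b. If ℤ[α] is the ring of integers of K, then (a, b) ≡ (0, 1) (mod 4) or (a, b) ≡ (2, 3) (mod 4). -/

import Mathlib

open NumberField Polynomial

/-- The index `(Z_K : ℤ[α])` of the subring generated by `α` in the ring of integers. -/
noncomputable def subindex {K : Type*} [Field K] [NumberField K] (α : 𝓞 K) : ℕ :=
  ((Algebra.adjoin ℤ ({α} : Set (𝓞 K))).toSubmodule.toAddSubgroup).index

/-- The set of indices of integral primitive elements of `K`. -/
def indexSet (K : Type*) [Field K] [NumberField K] : Set ℤ :=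
  {n : ℤ | ∃ α : 𝓞 K, Algebra.adjoin ℚ ({(α : K)} : Set K) = ⊤ ∧
    n = (subindex α : ℤ)}

/-- The index `i(K)` of the number field `K`: the gcd of the indices of all
integral primitive elements, realized as the nonnegative generator of the ideal
of `ℤ` generated by these indices. -/
noncomputable def fieldIndex (K : Type*) [Field K] [NumberField K] : ℕ :=
  (@Submodule.IsPrincipal.generator ℤ ℤ _ _ _ (Ideal.span (indexSet K))
    (IsPrincipalIdealRing.principal _)).natAbs

/-- A number field is monogenic if its ring of integers is generated by one element. -/
def IsMonogenic (K : Type*) [Field K] [NumberField K] : Prop :=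
  ∃ α : 𝓞 K, Algebra.adjoin ℤ ({α} : Set (𝓞 K)) = ⊤


lemma aeval_OK {K : Type*} [Field K] [NumberField K] (α : 𝓞 K) (p : Polynomial ℤ) :
    aeval (algebraMap (𝓞 K) K α) p = algebraMap (𝓞 K) K (aeval α p) :=
  aeval_algHom_apply (IsScalarTower.toAlgHom ℤ (𝓞 K) K) α p

lemma aux {K : Type*} [Field K] [NumberField K] (F g P : Polynomial ℤ)
    (hFm : F.Monic) (hFdeg : F.natDegree = 6)
    (hirr : Irreducible (F.map (Int.castRingHom ℚ)))
    (α : 𝓞 K) (hroot : aeval α F = 0)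
    (hZ : Algebra.adjoin ℤ ({α} : Set (𝓞 K)) = ⊤)
    (hPm : P.Monic)
    (hg2 : g.map (Int.castRingHom (ZMod 2)) ≠ 0)
    (hgdeg : g.natDegree < 6)
    (hP0 : aeval ((aeval (algebraMap (𝓞 K) K α) g) / 2) P = 0) : False := by
  set x := algebraMap (𝓞 K) K α with hx
  set β : K := aeval x g / 2 with hβ
  have hint : IsIntegral ℤ β := ⟨P, hPm, hP0⟩
  set γ : 𝓞 K := ⟨β, hint⟩ with hγ
  have hγβ : algebraMap (𝓞 K) K γ = β := rfl
  have hmem : γ ∈ Algebra.adjoin ℤ ({α} : Set (𝓞 K)) := hZ ▸ Algebra.mem_top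
  rw [Algebra.adjoin_singleton_eq_range_aeval, AlgHom.mem_range] at hmem
  obtain ⟨q, hq⟩ := hmem
  have hqK : aeval x q = β := by
    rw [hx, aeval_OK, hq, hγβ]
  have h2 : aeval x (g - 2 * q) = 0 := by
    rw [map_sub, map_mul, hqK, hβ]
    rw [show aeval x (2 : Polynomial ℤ) = (2 : K) from map_ofNat _ 2]
    field_simp
    ring
  have hFK : aeval x F = 0 := by rw [hx, aeval_OK, hroot, map_zero]
  have hminq : minpoly ℚ x = F.map (Int.castRingHom ℚ) := by
    symm
    apply minpoly.eq_of_irreducible_of_monic hirr ?_ (hFm.map _)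
    rwa [← algebraMap_int_eq, aeval_map_algebraMap]
  have hdvdQ : F.map (Int.castRingHom ℚ) ∣ (g - 2 * q).map (Int.castRingHom ℚ) := by
    rw [← hminq]
    apply minpoly.dvd
    rwa [← algebraMap_int_eq, aeval_map_algebraMap]
  have hdvd : F ∣ (g - 2 * q) :=
    (map_dvd_map (Int.castRingHom ℚ) Int.cast_injective hFm).mp hdvdQ
  have hdvd2 : F.map (Int.castRingHom (ZMod 2)) ∣ (g - 2 * q).map (Int.castRingHom (ZMod 2)) :=
    Polynomial.map_dvd _ hdvd
  have hmapeq : (g - 2 * q).map (Int.castRingHom (ZMod 2)) = g.map (Int.castRingHom (ZMod 2)) := by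
    rw [Polynomial.map_sub, Polynomial.map_mul]
    have : ((2 : Polynomial ℤ)).map (Int.castRingHom (ZMod 2)) = 0 := by
      rw [show (2 : Polynomial ℤ) = C 2 from by norm_cast, Polynomial.map_C]
      rw [show ((Int.castRingHom (ZMod 2)) 2 : ZMod 2) = 0 from by decide, map_zero]
    rw [this, zero_mul, sub_zero]
  rw [hmapeq] at hdvd2
  have hdegF : (F.map (Int.castRingHom (ZMod 2))).degree = 6 := by
    rw [Polynomial.degree_eq_natDegree (hFm.map (Int.castRingHom (ZMod 2))).ne_zero,
      hFm.natDegree_map, hFdeg]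
    rfl
  have hdeg : (g.map (Int.castRingHom (ZMod 2))).degree < (F.map (Int.castRingHom (ZMod 2))).degree := by
    rw [hdegF]
    calc (g.map (Int.castRingHom (ZMod 2))).degree ≤ g.degree := Polynomial.degree_map_le
      _ ≤ (g.natDegree : WithBot ℕ) := Polynomial.degree_le_natDegree
      _ < 6 := by exact_mod_cast hgdeg
  exact hg2 (Polynomial.eq_zero_of_dvd_of_degree_lt hdvd2 hdeg)

set_option maxHeartbeats 2000000 in
/-- If `K` is a sextic field defined by the irreducible trinomial `x^6 + a x^5 + b`
with root `α`, `ℤ[α]` is the full ring of integers, `2 ∣ a` and `2 ∤ b`, then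
`(a, b) ≡ (0, 1)` or `(2, 3) (mod 4)`. -/
theorem congruence_of_monogenic (a b : ℤ)
    (hirr : Irreducible ((X ^ 6 + C a * X ^ 5 + C b : Polynomial ℤ).map
      (Int.castRingHom ℚ)))
    (K : Type*) [Field K] [NumberField K] (α : 𝓞 K)
    (hroot : aeval α (X ^ 6 + C a * X ^ 5 + C b : Polynomial ℤ) = 0)
    (hgen : Algebra.adjoin ℚ ({(α : K)} : Set K) = ⊤)
    (hZ : Algebra.adjoin ℤ ({α} : Set (𝓞 K)) = ⊤)
    (ha : 2 ∣ a) (hb : ¬ (2 ∣ b)) :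
    (a % 4 = 0 ∧ b % 4 = 1) ∨ (a % 4 = 2 ∧ b % 4 = 3) := by
  by_contra hcon
  have hcase : (a % 4 = 0 ∧ b % 4 = 3) ∨ (a % 4 = 2 ∧ b % 4 = 1) := by omega
  rcases hcase with ⟨ha4, hb4⟩ | ⟨ha4, hb4⟩
  · obtain ⟨u, hu⟩ : ∃ u, a = 4 * u := ⟨a / 4, by omega⟩
    obtain ⟨v, hv⟩ : ∃ v, b = 4 * v + 3 := ⟨b / 4, by omega⟩
    subst hu; subst hv
    refine aux (X ^ 6 + C (4 * u) * X ^ 5 + C (4 * v + 3)) (X ^ 3 + 1) (X^6 + C (((-3) + 32*u^3)) * X^5 + C ((6 + 3*v + (-80)*u^3)) * X^4 + C (((-7) + (-6)*v + 80*u^3)) * X^3 + C ((6 + 9*v + 3*v^2 + (-40)*u^3)) * X^2 + C (((-3) + (-6)*v + (-3)*v^2 + 10*u^3)) * X + C ((1 + 3*v + 3*v^2 + 1*v^3 + (-1)*u^3))) ?_ ?_ hirr α hroot hZ ?_ ?_ ?_ ?_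
    · monicity!
    · compute_degree!
    · monicity!
    · intro hzero
      have h0 := congrArg (fun p => Polynomial.coeff p 0) hzero
      simp [Polynomial.coeff_map] at h0
    · have h5 : (X ^ 3 + 1 : Polynomial ℤ).natDegree ≤ 5 := by compute_degree!
      omega
    · set x : K := algebraMap (𝓞 K) K α with hx
      have hFK : aeval x (X ^ 6 + C (4 * u) * X ^ 5 + C (4 * v + 3)) = 0 := by
        rw [hx, aeval_OK, hroot, map_zero]
      simp only [map_add, map_mul, map_pow, map_one, aeval_X, aeval_C, aeval_one, map_ofNat, map_intCast,
        algebraMap_int_eq, eq_intCast] at hFK ⊢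
      push_cast at hFK ⊢
      linear_combination ((9 + 24*(v:K) + 16*(v:K)^2) + ((-12)*(u:K) + (-16)*(u:K)*(v:K))*x^5 + (6 + 8*(v:K))*x^6 + (16*(u:K)^2)*x^10 + ((-4)*(u:K))*x^11 + (1)*x^12) / 64 * hFK
  · obtain ⟨u, hu⟩ : ∃ u, a = 4 * u + 2 := ⟨a / 4, by omega⟩
    obtain ⟨v, hv⟩ : ∃ v, b = 4 * v + 1 := ⟨b / 4, by omega⟩
    subst hu; subst hv
    refine aux (X ^ 6 + C (4 * u + 2) * X ^ 5 + C (4 * v + 1)) (1 + X + X ^ 2 + X ^ 3 + X ^ 4 + X ^ 5) (X^6 + C ((8 + 114*u + 488*u^2 + 1056*u^3 + 1152*u^4 + 512*u^5)) * X^5 + C (((-13) + 43*v + (-199)*u + 344*u*v + (-908)*u^2 + 1248*u^2*v + (-2144)*u^3 + 1984*u^3*v + (-2560)*u^4 + 1280*u^4*v + (-1280)*u^5)) * X^4 + C ((18 + (-14)*v + 56*v^2 + 236*u + (-72)*u*v + 496*u*v^2 + 1000*u^2 + (-568)*u^2*v + 1248*u^2*v^2 + 2240*u^3 + (-1280)*u^3*v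 + 1280*u^3*v^2 + 2560*u^4 + (-1280)*u^4*v + 1280*u^5)) * X^3 + C (((-7) + 29*v + 40*v^2 + 68*v^3 + (-109)*u + 128*u*v + 60*u*v^2 + 336*u*v^3 + (-480)*u^2 + 480*u^2*v + 640*u^2*v^3 + (-1120)*u^3 + 640*u^3*v + (-640)*u^3*v^2 + (-1280)*u^4 + 640*u^4*v + (-640)*u^5)) * X^2 + C ((2 + (-4)*v + 8*v^2 + 24*v^3 + 32*v^4 + 30*u + 120*u*v^2 + 160*u*v^3 + 160*u*v^4 + 120*u^2 + (-120)*u^2*v + (-160)*u^2*v^3 + 280*u^3 + (-160)*u^3*v + 160*u^3*v^2 + 320*u^4 + (-160)*u^4*v + 160*u^5)) * X + C ((3*v + 12*v^2 + 28*v^3 + 32*v^4 + 16*v^5 + (-3)*u + (-12)*u*v^2 + (-16)*u*v^3 + (-16)*u*v^4 + (-12)*u^2 + 12*u^2*v + 16*u^2*v^3 + (-28)*u^3 + 16*u^3*v + (-16)*u^3*v^2 + (-32)*u^4 + 16*u^4*v + (-16)*u^5))) ?_ ?_ hirr α hroot hZ ?_ ?_ ?_ ?_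
    · monicity!
    · compute_degree!
    · monicity!
    · intro hzero
      have h0 := congrArg (fun p => Polynomial.coeff p 0) hzero
      simp [Polynomial.coeff_map] at h0
    · have h5 : (1 + X + X ^ 2 + X ^ 3 + X ^ 4 + X ^ 5 : Polynomial ℤ).natDegree ≤ 5 := by compute_degree!
      omega
    · set x : K := algebraMap (𝓞 K) K α with hx
      have hFK : aeval x (X ^ 6 + C (4 * u + 2) * X ^ 5 + C (4 * v + 1)) = 0 := by
        rw [hx, aeval_OK, hroot, map_zero]
      simp only [map_add, map_mul, map_pow, map_one, aeval_X, aeval_C, aeval_one, map_ofNat, map_intCast,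
        algebraMap_int_eq, eq_intCast] at hFK ⊢
      push_cast at hFK ⊢
      linear_combination ((61 + 344*(v:K) + 736*(v:K)^2 + 704*(v:K)^3 + 256*(v:K)^4 + 344*(u:K) + 1472*(u:K)*(v:K) + 2112*(u:K)*(v:K)^2 + 1024*(u:K)*(v:K)^3 + 736*(u:K)^2 + 2112*(u:K)^2*(v:K) + 1536*(u:K)^2*(v:K)^2 + 704*(u:K)^3 + 1024*(u:K)^3*(v:K) + 256*(u:K)^4) + (150 + 552*(v:K) + 672*(v:K)^2 + 256*(v:K)^3 + 1092*(u:K) + 3504*(u:K)*(v:K) + 3648*(u:K)*(v:K)^2 + 1280*(u:K)*(v:K)^3 + 2832*(u:K)^2 + 6528*(u:K)^2*(v:K) + 3840*(u:K)^2*(v:K)^2 + 3136*(u:K)^3 + 3840*(u:K)^3*(v:K) + 1280*(u:K)^4)*x + (333 + 980*(v:K) + 944*(v:K)^2 + 256*(v:K)^3 + 2516*(u:K) + 6384*(u:K)*(v:K) + 4992*(u:K)*(v:K)^2 + 1280*(u:K)*(v:K)^3 + 7120*(u:K)^2 + 13376*(u:K)^2*(v:K) + 6400*(u:K)^2*(v:K)^2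 + 8640*(u:K)^3 + 8960*(u:K)^3*(v:K) + 3840*(u:K)^4)*x^2 + (632 + 1520*(v:K) + 1216*(v:K)^2 + 256*(v:K)^3 + 4924*(u:K) + 10256*(u:K)*(v:K) + 6336*(u:K)*(v:K)^2 + 1280*(u:K)*(v:K)^3 + 14640*(u:K)^2 + 22720*(u:K)^2*(v:K) + 8960*(u:K)^2*(v:K)^2 + 18880*(u:K)^3 + 16640*(u:K)^3*(v:K) + 8960*(u:K)^4)*x^3 + (1090 + 2172*(v:K) + 1488*(v:K)^2 + 256*(v:K)^3 + 8660*(u:K) + 15120*(u:K)*(v:K) + 7680*(u:K)*(v:K)^2 + 1280*(u:K)*(v:K)^3 + 26640*(u:K)^2 + 34560*(u:K)^2*(v:K) + 11520*(u:K)^2*(v:K)^2 + 35840*(u:K)^3 + 26880*(u:K)^3*(v:K) + 17920*(u:K)^4)*x^4 + (1650 + 2648*(v:K) + 1440*(v:K)^2 + 128*(v:K)^3 + 13364*(u:K) + 19472*(u:K)*(v:K) + 7872*(u:K)*(v:K)^2 + 1024*(u:K)*(v:K)^3 + 42496*(u:K)^2 + 46272*(u:K)^2*(v:K) + 13056*(u:K)^2*(v:K)^2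 + 59264*(u:K)^3 + 38144*(u:K)^3*(v:K) + 30976*(u:K)^4)*x^5 + (2255 + 2812*(v:K) + 1072*(v:K)^2 + (-64)*(v:K)^3 + 18412*(u:K) + 21584*(u:K)*(v:K) + 5568*(u:K)*(v:K)^2 + 60352*(u:K)^2 + 53568*(u:K)^2*(v:K) + 11520*(u:K)^2*(v:K)^2 + 86976*(u:K)^3 + 47360*(u:K)^3*(v:K) + 47360*(u:K)^4)*x^6 + (2852 + 2800*(v:K) + 896*(v:K)^2 + 23300*(u:K) + 22352*(u:K)*(v:K) + 4160*(u:K)*(v:K)^2 + 78096*(u:K)^2 + 56000*(u:K)^2*(v:K) + 8960*(u:K)^2*(v:K)^2 + 115520*(u:K)^3 + 52480*(u:K)^3*(v:K) + 65280*(u:K)^4)*x^7 + (3336 + 2504*(v:K) + 624*(v:K)^2 + 27112*(u:K) + 21168*(u:K)*(v:K) + 2816*(u:K)*(v:K)^2 + 92784*(u:K)^2 + 53376*(u:K)^2*(v:K) + 6400*(u:K)^2*(v:K)^2 + 140160*(u:K)^3 + 52480*(u:K)^3*(v:K) + 81920*(u:K)^4)*x^8 + (3590 + 1984*(v:K) +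 352*(v:K)^2 + 28788*(u:K) + 18000*(u:K)*(v:K) + 1472*(u:K)*(v:K)^2 + 100640*(u:K)^2 + 45760*(u:K)^2*(v:K) + 3840*(u:K)^2*(v:K)^2 + 154880*(u:K)^3 + 47360*(u:K)^3*(v:K) + 93440*(u:K)^4)*x^9 + (3593 + 1384*(v:K) + 144*(v:K)^2 + 28128*(u:K) + 13680*(u:K)*(v:K) + 384*(u:K)*(v:K)^2 + 100336*(u:K)^2 + 34752*(u:K)^2*(v:K) + 1536*(u:K)^2*(v:K)^2 + 156864*(u:K)^3 + 38144*(u:K)^3*(v:K) + 97536*(u:K)^4)*x^10 + (3336 + 784*(v:K) + 25252*(u:K) + 9104*(u:K)*(v:K) + (-192)*(u:K)*(v:K)^2 + 92032*(u:K)^2 + 22848*(u:K)^2*(v:K) + 145856*(u:K)^3 + 26880*(u:K)^3*(v:K) + 93440*(u:K)^4)*x^11 + (2892 + 400*(v:K) + 16*(v:K)^2 + 20800*(u:K) + 5552*(u:K)*(v:K) + 77536*(u:K)^2 + 13440*(u:K)^2*(v:K) + 124160*(u:K)^3 + 16640*(u:K)^3*(v:K) + 81920*(u:K)^4)*x^12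 + (2318 + 136*(v:K) + 15516*(u:K) + 2880*(u:K)*(v:K) + 59440*(u:K)^2 + 6720*(u:K)^2*(v:K) + 96000*(u:K)^3 + 8960*(u:K)^3*(v:K) + 65280*(u:K)^4)*x^13 + (1737 + 4*(v:K) + 10516*(u:K) + 1184*(u:K)*(v:K) + 41584*(u:K)^2 + 2496*(u:K)^2*(v:K) + 67520*(u:K)^3 + 3840*(u:K)^3*(v:K) + 47360*(u:K)^4)*x^14 + (1204 + (-48)*(v:K) + 6324*(u:K) + 288*(u:K)*(v:K) + 26160*(u:K)^2 + 384*(u:K)^2*(v:K) + 42624*(u:K)^3 + 1024*(u:K)^3*(v:K) + 30976*(u:K)^4)*x^15 + (776 + (-36)*(v:K) + 3284*(u:K) + 14512*(u:K)^2 + (-192)*(u:K)^2*(v:K) + 23616*(u:K)^3 + 17920*(u:K)^4)*x^16 + (466 + (-8)*(v:K) + 1420*(u:K) + 32*(u:K)*(v:K) + 6976*(u:K)^2 + 11200*(u:K)^3 + 8960*(u:K)^4)*x^17 + (263 + (-4)*(v:K) + 476*(u:K) + 2880*(u:K)^2 + 4480*(u:K)^3 + 3840*(u:K)^4)*x^18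 + (136 + 60*(u:K) + 880*(u:K)^2 + 1280*(u:K)^3 + 1280*(u:K)^4)*x^19 + (66 + (-48)*(u:K) + 144*(u:K)^2 + 128*(u:K)^3 + 256*(u:K)^4)*x^20 + (30 + (-36)*(u:K) + (-64)*(u:K)^3)*x^21 + (13 + (-8)*(u:K) + 16*(u:K)^2)*x^22 + (4 + (-4)*(u:K))*x^23 + (1)*x^24) / 64 * hFK
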